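/- arXiv:1806.06810 — 2 statements merged into one kernel-verified Lean document; each statement's English description precedes it below -/
import Mathlib

section
/- Let H be a finite group of unimodular d×d matrices, M a dilation matrix appropriate for H, and c an appropriate center. The map sending (E, ⟨s⟩) to E⟨s⟩ := {EMβ + Es + c − Ec : β ∈ Z^d} defines a group action of H on the set of cosets D = Z^d / M Z^d; in particular E⟨s⟩ is again a coset of M Z^d in Z^d. -/
open Matrix BigOperators

def matR {d : ℕ} (A : Matrix (Fin d) (Fin d) ℤ) : Matrix (Fin d) (Fin d) ℝ :=
  A.map Int.cast

def intc {d : ℕ} (k : Fin d → ℤ) : Fin d → ℝ := fun i => (k i : ℝ)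

/-- The coset `⟨q⟩ = Mℤ^d + q` viewed inside `ℝ^d`. -/
def coset {d : ℕ} (M : Matrix (Fin d) (Fin d) ℤ) (q : Fin d → ℤ) : Set (Fin d → ℝ) :=
  {x | ∃ β : Fin d → ℤ, x = intc (M.mulVec β + q)}

/-- The action `E⟨s⟩ = {EMβ + Es + c − Ec : β ∈ ℤ^d}`. -/
def actC {d : ℕ} (M E : Matrix (Fin d) (Fin d) ℤ) (c : Fin d → ℝ)
    (s : Fin d → ℤ) : Set (Fin d → ℝ) :=
  {x | ∃ β : Fin d → ℤ, x = (matR E).mulVec (intc (M.mulVec β + s)) + c - (matR E).mulVec c}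

lemma intc_add {d : ℕ} (a b : Fin d → ℤ) : intc (a + b) = intc a + intc b := by
  funext i; simp [intc]

lemma intc_mulVec {d : ℕ} (A : Matrix (Fin d) (Fin d) ℤ) (v : Fin d → ℤ) :
    intc (A.mulVec v) = (matR A).mulVec (intc v) := by
  funext i
  simp only [intc, matR, Matrix.mulVec, dotProduct, Matrix.map_apply]
  push_cast
  rfl

lemma intc_inj {d : ℕ} : Function.Injective (intc (d := d)) := by
  intro a b h
  funext i
  have := congrFun h i
  simp only [intc] at this
  exact_mod_cast this

lemma matR_mul {d : ℕ} (A B : Matrix (Fin d) (Fin d) ℤ) :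
    matR (A * B) = matR A * matR B := by
  show (A * B).map (Int.castRingHom ℝ) = A.map (Int.castRingHom ℝ) * B.map (Int.castRingHom ℝ)
  exact Matrix.map_mul

lemma matR_one {d : ℕ} : matR (1 : Matrix (Fin d) (Fin d) ℤ) = 1 :=
  Matrix.map_one _ Int.cast_zero Int.cast_one

lemma matR_inj {d : ℕ} {A B : Matrix (Fin d) (Fin d) ℤ} (h : matR A = matR B) : A = B := by
  ext i j
  have := congrFun (congrFun h i) j
  simp only [matR, Matrix.map_apply] at this
  exact_mod_cast this

/-- Shifting the representative by an element of `Mℤ^d` does not change the coset. -/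
lemma coset_shift {d : ℕ} (M : Matrix (Fin d) (Fin d) ℤ) (β₀ s : Fin d → ℤ) :
    coset M (M.mulVec β₀ + s) = coset M s := by
  ext x
  simp only [coset, Set.mem_setOf_eq]
  constructor
  · rintro ⟨β, rfl⟩
    refine ⟨β + β₀, ?_⟩
    rw [Matrix.mulVec_add]
    congr 1
    abel
  · rintro ⟨β, rfl⟩
    refine ⟨β - β₀, ?_⟩
    rw [Matrix.mulVec_sub]
    congr 1
    abel

/-- The key computation: if `E*M = M*E'` with `E'` invertible over `ℤ`, and
`c - Ec = z ∈ ℤ^d`, then `E⟨s⟩ = ⟨Es + z⟩`. -/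
lemma actC_eq_coset {d : ℕ} {M E E' B : Matrix (Fin d) (Fin d) ℤ} {c : Fin d → ℝ}
    {z : Fin d → ℤ} (hME : E * M = M * E') (hB : E' * B = 1)
    (hz : c - (matR E).mulVec c = intc z) (s : Fin d → ℤ) :
    actC M E c s = coset M (E.mulVec s + z) := by
  have key : ∀ β : Fin d → ℤ,
      (matR E).mulVec (intc (M.mulVec β + s)) + c - (matR E).mulVec c
        = intc (M.mulVec (E'.mulVec β) + (E.mulVec s + z)) := by
    intro β
    have h2 : E.mulVec (M.mulVec β + s) = M.mulVec (E'.mulVec β) + E.mulVec s := by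
      rw [Matrix.mulVec_add, Matrix.mulVec_mulVec, hME, ← Matrix.mulVec_mulVec]
    calc (matR E).mulVec (intc (M.mulVec β + s)) + c - (matR E).mulVec c
        = intc (E.mulVec (M.mulVec β + s)) + (c - (matR E).mulVec c) := by
          rw [← intc_mulVec]; ring
      _ = intc (M.mulVec (E'.mulVec β) + E.mulVec s) + intc z := by rw [h2, hz]
      _ = intc (M.mulVec (E'.mulVec β) + (E.mulVec s + z)) := by
          simp only [intc_add]; abel
  ext x
  simp only [actC, coset, Set.mem_setOf_eq]
  constructor
  · rintro ⟨β, rfl⟩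
    exact ⟨E'.mulVec β, key β⟩
  · rintro ⟨β, rfl⟩
    refine ⟨B.mulVec β, ?_⟩
    have hEB : E'.mulVec (B.mulVec β) = β := by
      rw [Matrix.mulVec_mulVec, hB, Matrix.one_mulVec]
    rw [key (B.mulVec β), hEB]

/-- `(E, ⟨s⟩) ↦ E⟨s⟩` is a well-defined group action of `H`
on the set of cosets of `Mℤ^d` in `ℤ^d`; in particular `E⟨s⟩` is again a coset. -/
theorem coset_group_action {d : ℕ}
    (H : Finset (Matrix (Fin d) (Fin d) ℤ))
    (hmul : ∀ A ∈ H, ∀ B ∈ H, A * B ∈ H)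
    (hone : (1 : Matrix (Fin d) (Fin d) ℤ) ∈ H)
    (hinv : ∀ A ∈ H, ∃ B ∈ H, A * B = 1)
    (huni : ∀ A ∈ H, A.det = 1 ∨ A.det = -1)
    (M : Matrix (Fin d) (Fin d) ℤ) (hdet : (matR M).det ≠ 0)
    (happr : ∀ E ∈ H, ∃ E' ∈ H, (matR M)⁻¹ * matR E * matR M = matR E')
    (c : Fin d → ℝ)
    (hc : ∀ E ∈ H, ∃ z : Fin d → ℤ, c - (matR E).mulVec c = intc z) :
    -- E⟨s⟩ is again a coset
    (∀ E ∈ H, ∀ s : Fin d → ℤ, ∃ q : Fin d → ℤ, actC M E c s = coset M q) ∧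
    -- the action only depends on the coset ⟨s⟩, not on the representative s
    (∀ E ∈ H, ∀ s s' : Fin d → ℤ, coset M s = coset M s' →
      actC M E c s = actC M E c s') ∧
    -- the identity acts trivially
    (∀ s : Fin d → ℤ, actC M 1 c s = coset M s) ∧
    -- compatibility: (E₁E₂)⟨s⟩ = E₁(E₂⟨s⟩)
    (∀ E₁ ∈ H, ∀ E₂ ∈ H, ∀ s q : Fin d → ℤ,
      actC M E₂ c s = coset M q → actC M (E₁ * E₂) c s = actC M E₁ c q) := by
  -- for every `E ∈ H` there is `E' ∈ H` with `E*M = M*E'` (integer identity)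
  have happr' : ∀ E ∈ H, ∃ E' ∈ H, E * M = M * E' := by
    intro E hE
    obtain ⟨E', hE', h⟩ := happr E hE
    refine ⟨E', hE', matR_inj ?_⟩
    rw [matR_mul, matR_mul]
    have := congrArg (fun X => matR M * X) h
    simpa [← mul_assoc, Matrix.mul_nonsing_inv _ (isUnit_iff_ne_zero.mpr hdet)] using this
  -- if two cosets are equal, the representatives differ by an element of `Mℤ^d`
  have hrep : ∀ s s' : Fin d → ℤ, coset M s = coset M s' →
      ∃ β : Fin d → ℤ, s = M.mulVec β + s' := by
    intro s s' h
    have hs : intc s ∈ coset M s := ⟨0, by simp⟩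
    rw [h] at hs
    obtain ⟨β, hβ⟩ := hs
    exact ⟨β, intc_inj hβ⟩
  refine ⟨?_, ?_, ?_, ?_⟩
  · -- part 1
    intro E hE s
    obtain ⟨E', hE', hME⟩ := happr' E hE
    obtain ⟨B, _, hB⟩ := hinv E' hE'
    obtain ⟨z, hz⟩ := hc E hE
    exact ⟨E.mulVec s + z, actC_eq_coset hME hB hz s⟩
  · -- part 2
    intro E hE s s' h
    obtain ⟨E', hE', hME⟩ := happr' E hE
    obtain ⟨B, _, hB⟩ := hinv E' hE'
    obtain ⟨z, hz⟩ := hc E hE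
    obtain ⟨β, hβ⟩ := hrep s s' h
    rw [actC_eq_coset hME hB hz s, actC_eq_coset hME hB hz s']
    have : E.mulVec s + z = M.mulVec (E'.mulVec β) + (E.mulVec s' + z) := by
      rw [hβ, Matrix.mulVec_add, Matrix.mulVec_mulVec, hME, ← Matrix.mulVec_mulVec]
      abel
    rw [this, coset_shift]
  · -- part 3: identity acts trivially
    intro s
    ext x
    simp [actC, coset, matR_one, Matrix.one_mulVec]
  · -- part 4: compatibility
    intro E₁ hE₁ E₂ hE₂ s q h
    obtain ⟨E₁', hE₁', hME₁⟩ := happr' E₁ hE₁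
    obtain ⟨B₁, _, hB₁⟩ := hinv E₁' hE₁'
    obtain ⟨z₁, hz₁⟩ := hc E₁ hE₁
    obtain ⟨E₂', hE₂', hME₂⟩ := happr' E₂ hE₂
    obtain ⟨B₂, _, hB₂⟩ := hinv E₂' hE₂'
    obtain ⟨z₂, hz₂⟩ := hc E₂ hE₂
    -- the commuting matrix and inverse for E₁ * E₂
    have hME₁₂ : (E₁ * E₂) * M = M * (E₁' * E₂') := by
      rw [mul_assoc, hME₂, ← mul_assoc, hME₁, mul_assoc]
    have hB₁₂ : (E₁' * E₂') * (B₂ * B₁) = 1 := by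
      rw [mul_assoc, ← mul_assoc E₂', hB₂, one_mul, hB₁]
    -- the translation vector for E₁ * E₂
    have hz₁₂ : c - (matR (E₁ * E₂)).mulVec c = intc (z₁ + E₁.mulVec z₂) := by
      rw [intc_add, intc_mulVec, ← hz₁, ← hz₂, matR_mul, ← Matrix.mulVec_mulVec,
        Matrix.mulVec_sub]
      abel
    rw [actC_eq_coset hME₁₂ hB₁₂ hz₁₂ s, actC_eq_coset hME₁ hB₁ hz₁ q]
    -- rewrite q in terms of E₂ s + z₂
    have h2 : actC M E₂ c s = coset M (E₂.mulVec s + z₂) := actC_eq_coset hME₂ hB₂ hz₂ s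
    obtain ⟨γ, hγ⟩ := hrep q (E₂.mulVec s + z₂) (by rw [← h, h2])
    have hA : E₁.mulVec (M.mulVec γ) = M.mulVec (E₁'.mulVec γ) := by
      rw [Matrix.mulVec_mulVec, hME₁, ← Matrix.mulVec_mulVec]
    have hEs : (E₁ * E₂).mulVec s = E₁.mulVec (E₂.mulVec s) :=
      (Matrix.mulVec_mulVec _ _ _).symm
    have : E₁.mulVec q + z₁ = M.mulVec (E₁'.mulVec γ)
        + ((E₁ * E₂).mulVec s + (z₁ + E₁.mulVec z₂)) := by
      rw [hγ, Matrix.mulVec_add, Matrix.mulVec_add, hA, hEs]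
      abel
    rw [this, coset_shift]
end

section
/- Let P, P̃ be 1×m rows of trigonometric polynomials and U, Ũ be m×m matrices of trigonometric polynomials with U Ũ* = I_m. Define N = [[P, 1 − P P̃*],[U, −U P̃*]] and Ñ = [[P̃, 1],[Ũ − Ũ P* P̃, −Ũ P*]]. Then N Ñ* = I_{m+1}. -/
open Matrix BigOperators

abbrev TrigRing (d : ℕ) := (Fin d → ℝ) → ℂ

noncomputable def e2pi (x : ℝ) : ℂ := Complex.exp (2 * Real.pi * Complex.I * x)

def dotv {d : ℕ} (x y : Fin d → ℝ) : ℝ := ∑ i, x i * y i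

def IsTrigPoly {d : ℕ} (f : TrigRing d) : Prop :=
  ∃ h : (Fin d → ℤ) →₀ ℂ, ∀ ξ, f ξ = ∑ k ∈ h.support, h k * e2pi (dotv (intc k) ξ)

/-- general matrix extension with `U Ũ* = I_m`:
`N = [[P, 1 − PP̃*],[U, −UP̃*]]`, `Ñ = [[P̃, 1],[Ũ − ŨP*P̃, −ŨP*]]` satisfy
`N Ñ* = I_{m+1}`. -/
theorem general_matrix_extension {d m : ℕ}
    (P Pt : Matrix (Fin 1) (Fin m) (TrigRing d))
    (U Ut : Matrix (Fin m) (Fin m) (TrigRing d))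
    (hP : ∀ i j, IsTrigPoly (P i j)) (hPt : ∀ i j, IsTrigPoly (Pt i j))
    (hU : ∀ i j, IsTrigPoly (U i j)) (hUt : ∀ i j, IsTrigPoly (Ut i j))
    (hUUt : U * Utᴴ = 1) :
    (Matrix.fromBlocks P (1 - P * Ptᴴ) U (-(U * Ptᴴ))) *
      (Matrix.fromBlocks Pt (1 : Matrix (Fin 1) (Fin 1) (TrigRing d))
        (Ut - Ut * Pᴴ * Pt) (-(Ut * Pᴴ)))ᴴ
      = 1 := by
  rw [Matrix.fromBlocks_conjTranspose, Matrix.fromBlocks_multiply,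
    ← Matrix.fromBlocks_one]
  simp only [Matrix.conjTranspose_sub, Matrix.conjTranspose_neg,
    Matrix.conjTranspose_mul, Matrix.conjTranspose_conjTranspose,
    Matrix.conjTranspose_one]
  refine (Matrix.fromBlocks_inj.mpr ⟨?_, ?_, ?_, ?_⟩)
  all_goals simp only [Matrix.mul_sub, Matrix.sub_mul, Matrix.mul_neg,
    Matrix.neg_mul, Matrix.one_mul, Matrix.mul_one, neg_neg, Matrix.mul_assoc]
  · abel
  · abel
  · abel
  · rw [sub_add_cancel]
    exact hUUt
end
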